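/- Mehler's formula: for real x, y and complex z with |z| < 1, e^{-(x²+y²)/2} Σ_{n=0}^∞ (1/n!)(z/2)ⁿ Hₙ(x) Hₙ(y) = (1-z²)^{-1/2} exp[(4xyz - (x²+y²)(1+z²))/(2(1-z²))], where Hₙ are the physicists' Hermite polynomials. -/

import Mathlib

open Real Complex

/-- Physicists' Hermite polynomials `Hₙ(x) = (-1)ⁿ e^{x²} (dⁿ/dxⁿ) e^{-x²}`. -/
noncomputable def hermiteH (n : ℕ) (x : ℝ) : ℝ :=
  (-1)^n * Real.exp (x^2) * iteratedDeriv n (fun y => Real.exp (-y^2)) x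

namespace MehlerProof

open MeasureTheory

noncomputable def Fi (n : ℕ) (x : ℝ) : ℂ :=
  ∫ t : ℝ, (2*I*t)^n * Complex.exp (-(t:ℂ)^2 + 2*I*x*t)

lemma norm_integrand (n : ℕ) (x t : ℝ) :
    ‖(2*I*(t:ℂ))^n * Complex.exp (-(t:ℂ)^2 + 2*I*x*t)‖
      = 2^n * |t|^n * Real.exp (-t^2) := by
  rw [norm_mul, norm_pow]
  have h1 : ‖2*I*(t:ℂ)‖ = 2 * |t| := by
    simp [Complex.norm_real]
  have h2 : ‖Complex.exp (-(t:ℂ)^2 + 2*I*x*t)‖ = Real.exp (-t^2) := by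
    rw [Complex.norm_exp]
    congr 1
    simp [Complex.add_re, Complex.mul_re, Complex.mul_im, ← Complex.ofReal_pow]
  rw [h1, h2, mul_pow]

lemma abs_pow_le (n : ℕ) (t : ℝ) : |t|^n ≤ 1 + t^(2*n) := by
  have ht : (0:ℝ) ≤ t^(2*n) := by
    rw [pow_mul]; positivity
  rcases le_or_gt (|t|) 1 with h | h
  · calc |t|^n ≤ 1 := pow_le_one₀ (abs_nonneg t) h
    _ ≤ 1 + t^(2*n) := by linarith
  · have : |t|^n ≤ |t|^(2*n) := pow_le_pow_right₀ h.le (by omega)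
    have h2 : |t|^(2*n) = t^(2*n) := by
      rw [pow_mul, pow_mul, _root_.sq_abs]
    linarith [this, h2 ▸ this]

lemma integrable_bound (n : ℕ) : Integrable (fun t : ℝ =>
    (2:ℝ)^n * ((1 + t^(2*n)) * Real.exp (-1*t^2))) := by
  apply Integrable.const_mul
  have h1 : Integrable (fun t : ℝ => Real.exp (-1*t^2)) := integrable_exp_neg_mul_sq one_pos
  have h2 : Integrable (fun t : ℝ => t^(2*n) * Real.exp (-1*t^2)) := by
    have := integrable_rpow_mul_exp_neg_mul_sq (b := 1) one_pos
      (s := ((2*n : ℕ) : ℝ)) (by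
        have : (0:ℝ) ≤ ((2*n : ℕ) : ℝ) := Nat.cast_nonneg _
        linarith)
    have e : ∀ t : ℝ, t ^ (((2*n : ℕ) : ℝ)) = t ^ (2*n : ℕ) := fun t => Real.rpow_natCast t _
    simpa only [e] using this
  simpa [add_mul, one_mul, Pi.add_def] using h1.add h2

lemma integrable_integrand (n : ℕ) (x : ℝ) :
    Integrable (fun t : ℝ => (2*I*(t:ℂ))^n * Complex.exp (-(t:ℂ)^2 + 2*I*x*t)) := by
  apply Integrable.mono' (integrable_bound n)
  · apply Continuous.aestronglyMeasurable
    fun_prop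
  · filter_upwards with t
    rw [norm_integrand]
    have h := abs_pow_le n t
    have : (0:ℝ) < Real.exp (-t^2) := Real.exp_pos _
    have e : Real.exp (-1*t^2) = Real.exp (-t^2) := by norm_num
    rw [e]
    have h2 : (0:ℝ) ≤ (2:ℝ)^n := by positivity
    calc 2 ^ n * |t| ^ n * Real.exp (-t ^ 2)
        ≤ 2 ^ n * ((1 + t^(2*n)) * Real.exp (-t^2)) := by
          rw [mul_assoc]
          exact mul_le_mul_of_nonneg_left (mul_le_mul_of_nonneg_right h this.le) h2

lemma bound_aux (n : ℕ) (x t : ℝ) :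
    ‖(2*I*(t:ℂ))^n * Complex.exp (-(t:ℂ)^2 + 2*I*x*t)‖
      ≤ (2:ℝ)^n * ((1 + t^(2*n)) * Real.exp (-1*t^2)) := by
  rw [norm_integrand]
  have h := abs_pow_le n t
  have he : Real.exp (-1*t^2) = Real.exp (-t^2) := by norm_num
  have hp : (0:ℝ) ≤ (2:ℝ)^n := by positivity
  rw [he, mul_assoc]
  exact mul_le_mul_of_nonneg_left
    (mul_le_mul_of_nonneg_right h (Real.exp_pos _).le) hp

lemma integrand_hasDerivAt (n : ℕ) (t : ℝ) (x : ℝ) :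
    HasDerivAt (fun x : ℝ => (2*I*(t:ℂ))^n * Complex.exp (-(t:ℂ)^2 + 2*I*x*t))
      ((2*I*(t:ℂ))^(n+1) * Complex.exp (-(t:ℂ)^2 + 2*I*x*t)) x := by
  have h : HasDerivAt (fun u : ℂ => (2*I*(t:ℂ))^n * Complex.exp (-(t:ℂ)^2 + 2*I*u*t))
      ((2*I*(t:ℂ))^(n+1) * Complex.exp (-(t:ℂ)^2 + 2*I*(x:ℂ)*t)) (x:ℂ) := by
    have h1 : HasDerivAt (fun u : ℂ => -(t:ℂ)^2 + 2*I*u*t) (2*I*t) (x:ℂ) := by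
      simpa using (((hasDerivAt_id (x:ℂ)).const_mul (2*I)).mul_const (t:ℂ)).const_add (-(t:ℂ)^2)
    have h2 := (h1.cexp).const_mul ((2*I*(t:ℂ))^n)
    refine h2.congr_deriv ?_
    ring
  exact h.comp_ofReal

lemma Fi_hasDerivAt (n : ℕ) (x : ℝ) : HasDerivAt (Fi n) (Fi (n+1) x) x := by
  have := hasDerivAt_integral_of_dominated_loc_of_deriv_le
    (F := fun (x : ℝ) (t : ℝ) => (2*I*(t:ℂ))^n * Complex.exp (-(t:ℂ)^2 + 2*I*x*t))
    (F' := fun (x : ℝ) (t : ℝ) => (2*I*(t:ℂ))^(n+1) * Complex.exp (-(t:ℂ)^2 + 2*I*x*t))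
    (bound := fun t => (2:ℝ)^(n+1) * ((1 + t^(2*(n+1))) * Real.exp (-1*t^2)))
    (x₀ := x) (s := Metric.ball x 1) (Metric.ball_mem_nhds x one_pos)
    (Filter.Eventually.of_forall fun x => (integrable_integrand n x).aestronglyMeasurable)
    (integrable_integrand n x)
    (integrable_integrand (n+1) x).aestronglyMeasurable
    (Filter.Eventually.of_forall fun t => fun x _ => bound_aux (n+1) x t)
    (integrable_bound (n+1))
    (Filter.Eventually.of_forall fun t => fun x _ => integrand_hasDerivAt n t x)
  exact this.2

lemma Fi_zero (x : ℝ) : Fi 0 x = Complex.exp (-(x:ℂ)^2) * (π:ℂ)^(1/2:ℂ) := by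
  have h : ∀ t : ℝ, (2*I*(t:ℂ))^0 * Complex.exp (-(t:ℂ)^2 + 2*I*x*t)
      = Complex.exp ((-1)*(t:ℂ)^2 + (2*I*x)*t + 0) := by
    intro t; rw [pow_zero, one_mul]; ring_nf
  rw [Fi]
  simp_rw [h]
  rw [integral_cexp_quadratic (by norm_num : ((-1:ℂ)).re < 0)]
  have : (0 : ℂ) - (2*I*x)^2/(4*(-1)) = -(x:ℂ)^2 := by
    field_simp
    ring_nf
    simp [I_sq]
  rw [this]
  norm_num [mul_comm]

lemma iteratedDeriv_gaussian (n : ℕ) (x : ℝ) :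
    ((iteratedDeriv n (fun y => Real.exp (-y^2)) x : ℝ) : ℂ) * (π:ℂ)^(1/2:ℂ)
      = Fi n x := by
  induction n generalizing x with
  | zero =>
    simp only [iteratedDeriv_zero, Fi_zero]
    rw [Complex.ofReal_exp]
    push_cast
    ring
  | succ n ih =>
    have hG : ContDiff ℝ ⊤ (fun y : ℝ => Real.exp (-y^2)) := by
      apply Real.contDiff_exp.comp
      exact (contDiff_id.pow 2).neg
    have hd : HasDerivAt (iteratedDeriv n (fun y => Real.exp (-y^2)))
        (iteratedDeriv (n+1) (fun y => Real.exp (-y^2)) x) x := by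
      have h1 : DifferentiableAt ℝ (iteratedDeriv n (fun y => Real.exp (-y^2))) x :=
        (hG.differentiable_iteratedDeriv n
          (by exact_mod_cast lt_top_iff_ne_top.2 (by simp))).differentiableAt
      rw [iteratedDeriv_succ]
      exact h1.hasDerivAt
    have hL : HasDerivAt
        (fun x : ℝ => ((iteratedDeriv n (fun y => Real.exp (-y^2)) x : ℝ) : ℂ) * (π:ℂ)^(1/2:ℂ))
        (((iteratedDeriv (n+1) (fun y => Real.exp (-y^2)) x : ℝ) : ℂ) * (π:ℂ)^(1/2:ℂ)) x :=
      (hd.ofReal_comp).mul_const _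
    have heq : (fun x : ℝ =>
        ((iteratedDeriv n (fun y => Real.exp (-y^2)) x : ℝ) : ℂ) * (π:ℂ)^(1/2:ℂ)) = Fi n :=
      funext fun x => ih x
    rw [heq] at hL
    exact hL.unique (Fi_hasDerivAt n x)

noncomputable def gI (z : ℂ) (x y : ℝ) (n : ℕ) (p : ℝ × ℝ) : ℂ :=
  (1/(n.factorial:ℂ)) * (z/2)^n
    * ((2*I*(p.1:ℂ))^n * Complex.exp (-(p.1:ℂ)^2 + 2*I*x*p.1))
    * ((2*I*(p.2:ℂ))^n * Complex.exp (-(p.2:ℂ)^2 + 2*I*y*p.2))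

lemma cpow_half_sq : (π:ℂ)^(1/2:ℂ) * (π:ℂ)^(1/2:ℂ) = (π:ℂ) := by
  rw [← Complex.cpow_add _ _ (by exact_mod_cast Real.pi_ne_zero)]
  norm_num

lemma hermiteH_mul (n : ℕ) (x : ℝ) :
    (hermiteH n x : ℂ) * (π:ℂ)^(1/2:ℂ)
      = (-1)^n * Complex.exp ((x:ℂ)^2) * Fi n x := by
  unfold hermiteH
  push_cast
  rw [← iteratedDeriv_gaussian n x]
  ring

lemma term_eq (z : ℂ) (x y : ℝ) (n : ℕ) :
    (1/(n.factorial:ℂ)) * (z/2)^n * (hermiteH n x : ℂ) * (hermiteH n y : ℂ) * (π:ℂ)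
      = Complex.exp ((x:ℂ)^2 + (y:ℂ)^2) * ∫ p : ℝ × ℝ, gI z x y n p := by
  have hx := hermiteH_mul n x
  have hy := hermiteH_mul n y
  have hint : ∫ p : ℝ × ℝ, gI z x y n p
      = (1/(n.factorial:ℂ)) * (z/2)^n * (Fi n x * Fi n y) := by
    unfold gI
    rw [Measure.volume_eq_prod]
    have := MeasureTheory.integral_prod_mul (μ := (volume : Measure ℝ)) (ν := (volume : Measure ℝ))
      (f := fun t : ℝ => (1/(n.factorial:ℂ)) * (z/2)^n
        * ((2*I*(t:ℂ))^n * Complex.exp (-(t:ℂ)^2 + 2*I*x*t)))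
      (g := fun s : ℝ => (2*I*(s:ℂ))^n * Complex.exp (-(s:ℂ)^2 + 2*I*y*s))
    rw [this, MeasureTheory.integral_const_mul]
    unfold Fi
    ring
  rw [hint]
  have hpi := cpow_half_sq
  have h2 : (hermiteH n x : ℂ) * (hermiteH n y : ℂ) * (π:ℂ)
      = ((-1)^n * Complex.exp ((x:ℂ)^2) * Fi n x)
        * ((-1)^n * Complex.exp ((y:ℂ)^2) * Fi n y) := by
    rw [← hx, ← hy, mul_mul_mul_comm, hpi]
  have hsign : ((-1:ℂ))^n * (-1)^n = 1 := by rw [← mul_pow]; norm_num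
  calc (1/(n.factorial:ℂ)) * (z/2)^n * (hermiteH n x : ℂ) * (hermiteH n y : ℂ) * (π:ℂ)
      = (1/(n.factorial:ℂ)) * (z/2)^n * ((hermiteH n x : ℂ) * (hermiteH n y : ℂ) * (π:ℂ)) := by
        ring
    _ = (1/(n.factorial:ℂ)) * (z/2)^n
          * (((-1)^n * Complex.exp ((x:ℂ)^2) * Fi n x)
            * ((-1)^n * Complex.exp ((y:ℂ)^2) * Fi n y)) := by
        rw [h2]
    _ = ((-1:ℂ))^n * (-1)^n * (Complex.exp ((x:ℂ)^2) * Complex.exp ((y:ℂ)^2)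
          * ((1/(n.factorial:ℂ)) * (z/2)^n * (Fi n x * Fi n y))) := by ring
    _ = Complex.exp ((x:ℂ)^2 + (y:ℂ)^2)
          * ((1/(n.factorial:ℂ)) * (z/2)^n * (Fi n x * Fi n y)) := by
        rw [hsign, Complex.exp_add]; ring

lemma gI_continuous (z : ℂ) (x y : ℝ) (n : ℕ) : Continuous (gI z x y n) := by
  unfold gI
  fun_prop

lemma norm_gI (z : ℂ) (x y : ℝ) (n : ℕ) (p : ℝ × ℝ) :
    ‖gI z x y n p‖ = ((2*‖z‖*|p.1| * |p.2|)^n / n.factorial)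
      * (Real.exp (-p.1^2) * Real.exp (-p.2^2)) := by
  unfold gI
  rw [norm_mul, norm_mul, norm_integrand, norm_integrand, norm_mul]
  simp only [norm_div, norm_one, norm_pow, Complex.norm_ofNat,
    Complex.norm_natCast]
  rw [div_pow, mul_pow, mul_pow, mul_pow]
  have h2 : (2:ℝ)^n ≠ 0 := by positivity
  field_simp

lemma summable_norm_gI (z : ℂ) (x y : ℝ) (p : ℝ × ℝ) :
    Summable (fun n : ℕ => ‖gI z x y n p‖) := by
  simp only [norm_gI]
  apply Summable.mul_right
  simpa using Real.summable_pow_div_factorial (2*‖z‖*|p.1| * |p.2|)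

lemma tsum_norm_gI (z : ℂ) (x y : ℝ) (p : ℝ × ℝ) :
    (∑' n : ℕ, ‖gI z x y n p‖)
      = Real.exp (2*‖z‖*|p.1| * |p.2|)
        * (Real.exp (-p.1^2) * Real.exp (-p.2^2)) := by
  simp only [norm_gI]
  rw [tsum_mul_right]
  congr 1
  rw [Real.exp_eq_exp_ℝ, NormedSpace.exp_eq_tsum_div]

lemma tsum_gI (z : ℂ) (x y : ℝ) (p : ℝ × ℝ) :
    (∑' n : ℕ, gI z x y n p)
      = Complex.exp (-(p.1:ℂ)^2 - (p.2:ℂ)^2 - 2*z*p.1*p.2 + 2*I*x*p.1 + 2*I*y*p.2) := by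
  have hfactor : ∀ n : ℕ, gI z x y n p
      = ((-2*z*p.1*p.2)^n / n.factorial)
        * (Complex.exp (-(p.1:ℂ)^2 + 2*I*x*p.1) * Complex.exp (-(p.2:ℂ)^2 + 2*I*y*p.2)) := by
    intro n
    unfold gI
    rw [show ((-2:ℂ)*z*p.1*p.2)^n = (z/2)^n * (2*I*(p.1:ℂ))^n * (2*I*(p.2:ℂ))^n by
      rw [← mul_pow, ← mul_pow]
      congr 1
      linear_combination (-2*z*(p.1:ℂ)*(p.2:ℂ)) * Complex.I_sq]
    ring
  simp only [hfactor]
  rw [tsum_mul_right]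
  have : Complex.exp (-2*z*p.1*p.2) = ∑' n : ℕ, (-2*z*p.1*p.2)^n / n.factorial := by
    rw [Complex.exp_eq_exp_ℂ, NormedSpace.exp_eq_tsum_div]
  rw [← this, ← Complex.exp_add, ← Complex.exp_add]
  congr 1
  ring

lemma swap_lemma (z : ℂ) (hz : ‖z‖ < 1) (x y : ℝ) :
    (∑' n : ℕ, ∫ p : ℝ × ℝ, gI z x y n p)
      = ∫ p : ℝ × ℝ,
          Complex.exp (-(p.1:ℂ)^2 - (p.2:ℂ)^2 - 2*z*p.1*p.2 + 2*I*x*p.1 + 2*I*y*p.2) := by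
  have hc : (0:ℝ) < 1 - ‖z‖ := by linarith
  have hInt : Integrable (fun p : ℝ × ℝ =>
      Real.exp (-(1-‖z‖)*p.1^2) * Real.exp (-(1-‖z‖)*p.2^2)) := by
    rw [Measure.volume_eq_prod]
    exact (integrable_exp_neg_mul_sq hc).mul_prod (integrable_exp_neg_mul_sq hc)
  have hptbound : ∀ p : ℝ × ℝ, (∑' n : ℕ, ‖gI z x y n p‖)
      ≤ Real.exp (-(1-‖z‖)*p.1^2) * Real.exp (-(1-‖z‖)*p.2^2) := by
    intro p
    rw [tsum_norm_gI, ← Real.exp_add, ← Real.exp_add, ← Real.exp_add]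
    apply Real.exp_le_exp.2
    have h1 : 2 * |p.1| * |p.2| ≤ p.1^2 + p.2^2 := by
      nlinarith [sq_nonneg (|p.1| - |p.2|), _root_.sq_abs p.1, _root_.sq_abs p.2]
    have h2 : 2 * ‖z‖ * |p.1| * |p.2| ≤ ‖z‖ * (p.1^2 + p.2^2) := by
      have := mul_le_mul_of_nonneg_left h1 (norm_nonneg z)
      nlinarith [this]
    nlinarith [h2]
  have hb : ∫⁻ p : ℝ × ℝ, (∑' n : ℕ, (‖gI z x y n p‖₊ : ENNReal))
      ≤ ∫⁻ p : ℝ × ℝ, ENNReal.ofReal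
        (Real.exp (-(1-‖z‖)*p.1^2) * Real.exp (-(1-‖z‖)*p.2^2)) := by
    apply lintegral_mono
    intro p
    have : (∑' n : ℕ, (‖gI z x y n p‖₊ : ENNReal))
        = ENNReal.ofReal (∑' n : ℕ, ‖gI z x y n p‖) := by
      rw [ENNReal.ofReal_tsum_of_nonneg (fun n => norm_nonneg _) (summable_norm_gI z x y p)]
      simp [enorm_eq_nnnorm]
    simp only []
    rw [this]
    exact ENNReal.ofReal_le_ofReal (hptbound p)
  have hfin : ∫⁻ p : ℝ × ℝ, ENNReal.ofReal
      (Real.exp (-(1-‖z‖)*p.1^2) * Real.exp (-(1-‖z‖)*p.2^2)) < ⊤ := by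
    have := hInt.hasFiniteIntegral
    rwa [hasFiniteIntegral_iff_ofReal] at this
    filter_upwards with p
    positivity
  have hne : (∑' n : ℕ, ∫⁻ p : ℝ × ℝ, (‖gI z x y n p‖₊ : ENNReal)) ≠ ⊤ := by
    rw [← lintegral_tsum (fun n =>
      ((gI_continuous z x y n).measurable.nnnorm.coe_nnreal_ennreal).aemeasurable)]
    exact (lt_of_le_of_lt hb hfin).ne
  rw [← integral_tsum (fun n => (gI_continuous z x y n).aestronglyMeasurable) hne]
  congr 1
  funext p
  exact tsum_gI z x y p

lemma re_neg_lt (z : ℂ) (hz : ‖z‖ < 1) : (z^2 - 1).re < 0 := by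
  have h1 : (z^2).re ≤ ‖z^2‖ := Complex.re_le_norm _
  have h2 : ‖z^2‖ = (‖z‖)^2 := by rw [norm_pow]
  have h3 : (‖z‖)^2 < 1 := by nlinarith [norm_nonneg z]
  simp only [Complex.sub_re, Complex.one_re]
  linarith

lemma integrable_big (z : ℂ) (hz : ‖z‖ < 1) (x y : ℝ) :
    Integrable (fun p : ℝ × ℝ =>
      Complex.exp (-(p.1:ℂ)^2 - (p.2:ℂ)^2 - 2*z*p.1*p.2 + 2*I*x*p.1 + 2*I*y*p.2)) := by
  have hc : (0:ℝ) < 1 - ‖z‖ := by linarith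
  have hInt : Integrable (fun p : ℝ × ℝ =>
      Real.exp (-(1-‖z‖)*p.1^2) * Real.exp (-(1-‖z‖)*p.2^2)) := by
    rw [Measure.volume_eq_prod]
    exact (integrable_exp_neg_mul_sq hc).mul_prod (integrable_exp_neg_mul_sq hc)
  apply Integrable.mono' hInt
  · apply Continuous.aestronglyMeasurable
    fun_prop
  · filter_upwards with p
    rw [Complex.norm_exp, ← Real.exp_add]
    apply Real.exp_le_exp.2
    have hre : (-(p.1:ℂ)^2 - (p.2:ℂ)^2 - 2*z*p.1*p.2 + 2*I*x*p.1 + 2*I*y*p.2).re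
        = -p.1^2 - p.2^2 - 2*z.re*p.1*p.2 := by
      simp [Complex.sub_re, Complex.add_re, Complex.mul_re, Complex.mul_im,
        ← Complex.ofReal_pow]
    rw [hre]
    have h1 : 2 * |p.1| * |p.2| ≤ p.1^2 + p.2^2 := by
      nlinarith [sq_nonneg (|p.1| - |p.2|), _root_.sq_abs p.1, _root_.sq_abs p.2]
    have h2 : |2*z.re*p.1*p.2| ≤ ‖z‖ * (p.1^2 + p.2^2) := by
      have hzre : |z.re| ≤ ‖z‖ := Complex.abs_re_le_norm z
      have habs : |2*z.re*p.1*p.2| = 2 * |z.re| * |p.1| * |p.2| := by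
        rw [abs_mul, abs_mul, abs_mul]
        norm_num
      rw [habs]
      have hn : (0:ℝ) ≤ |p.1| * |p.2| := mul_nonneg (abs_nonneg _) (abs_nonneg _)
      nlinarith [mul_le_mul_of_nonneg_left h1 (norm_nonneg z),
        mul_le_mul_of_nonneg_right hzre (by positivity : (0:ℝ) ≤ 2*(|p.1| * |p.2|))]
    have h3 := neg_abs_le (2*z.re*p.1*p.2)
    linarith

lemma gaussian_eval (z : ℂ) (hz : ‖z‖ < 1) (x y : ℝ) :
    ∫ p : ℝ × ℝ, Complex.exp (-(p.1:ℂ)^2 - (p.2:ℂ)^2 - 2*z*p.1*p.2 + 2*I*x*p.1 + 2*I*y*p.2)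
      = (π:ℂ)^(1/2:ℂ) * ((π:ℂ)/(1-z^2))^(1/2:ℂ)
        * Complex.exp (-(y:ℂ)^2 + ((x:ℂ)-y*z)^2/(z^2-1)) := by
  rw [Measure.volume_eq_prod]
  rw [MeasureTheory.integral_prod _ (Measure.volume_eq_prod ℝ ℝ ▸ integrable_big z hz x y)]
  have inner : ∀ t : ℝ,
      (∫ s : ℝ, Complex.exp (-(t:ℂ)^2 - (s:ℂ)^2 - 2*z*t*s + 2*I*x*t + 2*I*y*s))
      = (π:ℂ)^(1/2:ℂ)
        * Complex.exp ((z^2-1)*(t:ℂ)^2 + (2*I*x - 2*I*y*z)*t + (-(y:ℂ)^2)) := by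
    intro t
    have h : ∀ s : ℝ, (-(t:ℂ)^2 - (s:ℂ)^2 - 2*z*t*s + 2*I*x*t + 2*I*y*s)
        = (-1)*(s:ℂ)^2 + (2*I*y - 2*z*t)*s + (-(t:ℂ)^2 + 2*I*x*t) := by
      intro s; ring
    simp_rw [h]
    rw [integral_cexp_quadratic (by norm_num : ((-1:ℂ)).re < 0)]
    have : ((π:ℂ)/(-(-1)))^(1/2:ℂ) = (π:ℂ)^(1/2:ℂ) := by norm_num
    rw [this]
    congr 1
    congr 1
    linear_combination (y:ℂ)^2 * Complex.I_sq
  simp_rw [inner, MeasureTheory.integral_const_mul]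
  rw [integral_cexp_quadratic (re_neg_lt z hz)]
  have hw : z^2 - 1 ≠ 0 := by
    intro h
    have := re_neg_lt z hz
    rw [h] at this
    simp at this
  rw [show -(z^2-1) = 1 - z^2 by ring]
  have harg : -(y:ℂ)^2 - (2*I*x - 2*I*y*z)^2/(4*(z^2-1))
      = -(y:ℂ)^2 + ((x:ℂ)-y*z)^2/(z^2-1) := by
    field_simp
    ring_nf
    linear_combination (-4*((x:ℂ)-y*z)^2) * Complex.I_sq
  rw [harg]
  ring

lemma cpow_pi_div (w : ℂ) (hw : w ≠ 0) (harg : w.arg ≠ π) (s : ℂ) :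
    ((π:ℂ)/w)^s = (π:ℂ)^s * w^(-s) := by
  rw [div_eq_mul_inv]
  have hπ : (0:ℝ) < π := Real.pi_pos
  have hw' : w⁻¹ ≠ 0 := inv_ne_zero hw
  rw [Complex.cpow_def_of_ne_zero (mul_ne_zero (by exact_mod_cast hπ.ne' : (π:ℂ) ≠ 0) hw'),
    Complex.log_ofReal_mul hπ hw', add_mul, Complex.exp_add]
  rw [Complex.cpow_def_of_ne_zero (by exact_mod_cast hπ.ne' : (π:ℂ) ≠ 0)]
  rw [Complex.ofReal_log hπ.le]
  congr 1
  rw [← Complex.cpow_def_of_ne_zero hw', Complex.inv_cpow _ _ harg, ← Complex.cpow_neg]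

end MehlerProof

theorem mehler_formula (x y : ℝ) (z : ℂ) (hz : ‖z‖ < 1) :
    Complex.exp (-((x:ℂ)^2 + (y:ℂ)^2)/2) *
      ∑' n : ℕ, (1 / (n.factorial : ℂ)) * (z/2)^n * (hermiteH n x : ℂ) * (hermiteH n y : ℂ)
    = (1 - z^2) ^ (-(1/2) : ℂ) *
      Complex.exp ((4*(x:ℂ)*(y:ℂ)*z - ((x:ℂ)^2 + (y:ℂ)^2)*(1 + z^2)) / (2*(1 - z^2))) := by
  have hw : z^2 - 1 ≠ 0 := by
    intro h
    have := MehlerProof.re_neg_lt z hz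
    rw [h] at this
    simp at this
  have hw1 : (1:ℂ) - z^2 ≠ 0 := by
    intro h
    apply hw
    linear_combination -h
  have hre1 : (0:ℝ) < (1 - z^2).re := by
    have := MehlerProof.re_neg_lt z hz
    have e : (1 - z^2).re = -((z^2 - 1).re) := by
      simp [Complex.sub_re]
    rw [e]
    linarith
  have harg : (1 - z^2).arg ≠ π := by
    intro h
    rw [Complex.arg_eq_pi_iff] at h
    linarith [h.1]
  have hπne : (π:ℂ) ≠ 0 := by exact_mod_cast Real.pi_ne_zero
  have hK : (∑' n : ℕ, (1 / (n.factorial : ℂ)) * (z/2)^n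
        * (hermiteH n x : ℂ) * (hermiteH n y : ℂ)) * (π:ℂ)
      = Complex.exp ((x:ℂ)^2 + (y:ℂ)^2) * ∫ p : ℝ × ℝ,
          Complex.exp (-(p.1:ℂ)^2 - (p.2:ℂ)^2 - 2*z*p.1*p.2 + 2*I*x*p.1 + 2*I*y*p.2) := by
    rw [← tsum_mul_right]
    have : ∀ n : ℕ, (1 / (n.factorial : ℂ)) * (z/2)^n
        * (hermiteH n x : ℂ) * (hermiteH n y : ℂ) * (π:ℂ)
        = Complex.exp ((x:ℂ)^2 + (y:ℂ)^2) * ∫ p : ℝ × ℝ, MehlerProof.gI z x y n p :=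
      fun n => MehlerProof.term_eq z x y n
    simp_rw [this]
    rw [tsum_mul_left, MehlerProof.swap_lemma z hz x y]
  apply mul_right_cancel₀ hπne
  rw [show Complex.exp (-((x:ℂ)^2 + (y:ℂ)^2)/2) *
      (∑' n : ℕ, (1 / (n.factorial : ℂ)) * (z/2)^n
        * (hermiteH n x : ℂ) * (hermiteH n y : ℂ)) * (π:ℂ)
      = Complex.exp (-((x:ℂ)^2 + (y:ℂ)^2)/2) *
        ((∑' n : ℕ, (1 / (n.factorial : ℂ)) * (z/2)^n
          * (hermiteH n x : ℂ) * (hermiteH n y : ℂ)) * (π:ℂ)) from by ring]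
  rw [hK, MehlerProof.gaussian_eval z hz x y, MehlerProof.cpow_pi_div (1 - z^2) hw1 harg (1/2:ℂ)]
  have hexp : Complex.exp (-((x:ℂ)^2 + (y:ℂ)^2)/2)
      * (Complex.exp ((x:ℂ)^2 + (y:ℂ)^2)
        * Complex.exp (-(y:ℂ)^2 + ((x:ℂ)-y*z)^2/(z^2-1)))
      = Complex.exp ((4*(x:ℂ)*(y:ℂ)*z - ((x:ℂ)^2 + (y:ℂ)^2)*(1 + z^2)) / (2*(1 - z^2))) := by
    rw [← Complex.exp_add, ← Complex.exp_add]
    congr 1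
    field_simp
    ring
  calc Complex.exp (-((x:ℂ)^2 + (y:ℂ)^2)/2) *
        (Complex.exp ((x:ℂ)^2 + (y:ℂ)^2)
          * ((π:ℂ)^(1/2:ℂ) * ((π:ℂ)^(1/2:ℂ) * (1 - z^2)^(-(1/2:ℂ)))
            * Complex.exp (-(y:ℂ)^2 + ((x:ℂ)-y*z)^2/(z^2-1))))
      = ((π:ℂ)^(1/2:ℂ) * (π:ℂ)^(1/2:ℂ)) * ((1 - z^2)^(-(1/2:ℂ))
          * (Complex.exp (-((x:ℂ)^2 + (y:ℂ)^2)/2)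
            * (Complex.exp ((x:ℂ)^2 + (y:ℂ)^2)
              * Complex.exp (-(y:ℂ)^2 + ((x:ℂ)-y*z)^2/(z^2-1))))) := by ring
    _ = (π:ℂ) * ((1 - z^2)^(-(1/2:ℂ))
          * Complex.exp ((4*(x:ℂ)*(y:ℂ)*z - ((x:ℂ)^2 + (y:ℂ)^2)*(1 + z^2)) / (2*(1 - z^2)))) := by
        rw [MehlerProof.cpow_half_sq, hexp]
    _ = (1 - z^2) ^ (-(1/2) : ℂ) *
        Complex.exp ((4*(x:ℂ)*(y:ℂ)*z - ((x:ℂ)^2 + (y:ℂ)^2)*(1 + z^2)) / (2*(1 - z^2))) * (π:ℂ) := by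
        ring
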